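/- Let α ∈ (1,2). There exists a constant C₅ = C₅(α) such that for all t > 0, ∫_0^{t/2} ∫_{t/2}^t (r−u)^{-2/α} · ((t−r)^{1/α−1} + (r−u)^{1/α−1}) · ((t−u)^{1/α−1} + u^{1/α−1}) dr du ≤ C₅. -/

import Mathlib

set_option maxHeartbeats 1000000

open MeasureTheory Real
open scoped ENNReal

lemma lint_left (a b p : ℝ) (hab : a ≤ b) (hp : -1 < p) :
    ∫⁻ x in Set.Ioo a b, ENNReal.ofReal ((x - a) ^ p) =
      ENNReal.ofReal ((b - a) ^ (p + 1) / (p + 1)) := by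
  have hInt : IntervalIntegrable (fun x : ℝ => (x - a) ^ p) volume a b := by
    have := (intervalIntegral.intervalIntegrable_rpow' (a := 0) (b := b - a) hp).comp_sub_right a
    simpa using this
  have hIntOn : IntegrableOn (fun x : ℝ => (x - a) ^ p) (Set.Ioo a b) volume :=
    (hInt.1).mono_set Set.Ioo_subset_Ioc_self
  rw [← MeasureTheory.ofReal_integral_eq_lintegral_ofReal hIntOn ?_]
  · congr 1
    rw [← MeasureTheory.integral_Ioc_eq_integral_Ioo, ← intervalIntegral.integral_of_le hab]
    rw [intervalIntegral.integral_comp_sub_right (fun x => x ^ p) a]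
    simp only [sub_self]
    rw [integral_rpow (Or.inl hp)]
    rw [Real.zero_rpow (by linarith)]
    ring
  · filter_upwards [ae_restrict_mem measurableSet_Ioo] with x hx
    exact Real.rpow_nonneg (by linarith [hx.1]) _

lemma lint_right (a b p : ℝ) (hab : a ≤ b) (hp : -1 < p) :
    ∫⁻ x in Set.Ioo a b, ENNReal.ofReal ((b - x) ^ p) =
      ENNReal.ofReal ((b - a) ^ (p + 1) / (p + 1)) := by
  have hInt : IntervalIntegrable (fun x : ℝ => (b - x) ^ p) volume a b := by
    have := ((intervalIntegral.intervalIntegrable_rpow' (a := 0) (b := b - a) hp).comp_sub_left b).symm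
    simpa using this
  have hIntOn : IntegrableOn (fun x : ℝ => (b - x) ^ p) (Set.Ioo a b) volume :=
    (hInt.1).mono_set Set.Ioo_subset_Ioc_self
  rw [← MeasureTheory.ofReal_integral_eq_lintegral_ofReal hIntOn ?_]
  · congr 1
    rw [← MeasureTheory.integral_Ioc_eq_integral_Ioo, ← intervalIntegral.integral_of_le hab]
    rw [intervalIntegral.integral_comp_sub_left (fun x => x ^ p) b]
    simp only [sub_self]
    rw [integral_rpow (Or.inl hp)]
    rw [Real.zero_rpow (by linarith)]
    ring
  · filter_upwards [ae_restrict_mem measurableSet_Ioo] with x hx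
    exact Real.rpow_nonneg (by linarith [hx.2]) _

lemma lint_beta (a b p q : ℝ) (hab : a < b) (hp : -1 < p) (hp0 : p < 0)
    (hq : -1 < q) (hq0 : q < 0) :
    ∫⁻ x in Set.Ioo a b, ENNReal.ofReal ((x - a) ^ p * (b - x) ^ q) ≤
      ENNReal.ofReal (((b - a) / 2) ^ (p + q + 1) * (1 / (p + 1) + 1 / (q + 1))) := by
  set m := (a + b) / 2 with hm
  have hma : a < m := by simp [hm]; linarith
  have hmb : m < b := by simp [hm]; linarith
  have hd : (0:ℝ) < (b - a) / 2 := by linarith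
  have hsplit : Set.Ioo a b = Set.Ioo a m ∪ Set.Ico m b := by
    ext x
    simp only [Set.mem_Ioo, Set.mem_union, Set.mem_Ico]
    constructor
    · rintro ⟨h1, h2⟩
      by_cases h : x < m
      · exact Or.inl ⟨h1, h⟩
      · exact Or.inr ⟨not_lt.mp h, h2⟩
    · rintro (⟨h1, h2⟩ | ⟨h1, h2⟩)
      · exact ⟨h1, h2.trans hmb⟩
      · exact ⟨hma.trans_le h1, h2⟩
  rw [hsplit]
  refine le_trans (MeasureTheory.lintegral_union_le _ _ _) ?_
  have hIco : (volume : Measure ℝ).restrict (Set.Ico m b) = volume.restrict (Set.Ioo m b) := by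
    rw [← MeasureTheory.restrict_Ioo_eq_restrict_Ico]
  have h1 : ∫⁻ x in Set.Ioo a m, ENNReal.ofReal ((x - a) ^ p * (b - x) ^ q) ≤
      ENNReal.ofReal (((b - a) / 2) ^ (p + q + 1) * (1 / (p + 1))) := by
    have step : ∫⁻ x in Set.Ioo a m, ENNReal.ofReal ((x - a) ^ p * (b - x) ^ q) ≤
        ∫⁻ x in Set.Ioo a m, ENNReal.ofReal (((b - a) / 2) ^ q * (x - a) ^ p) := by
      refine MeasureTheory.setLIntegral_mono' measurableSet_Ioo fun x hx => ?_
      refine ENNReal.ofReal_le_ofReal ?_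
      rw [mul_comm (((b - a) / 2) ^ q)]
      refine mul_le_mul_of_nonneg_left ?_ (Real.rpow_nonneg (by linarith [hx.1]) _)
      refine Real.rpow_le_rpow_of_nonpos hd ?_ hq0.le
      have hxm : x < m := hx.2
      have : b - x > b - m := by linarith
      have hbm : b - m = (b - a) / 2 := by simp [hm]; ring
      linarith [hbm ▸ this]
    refine step.trans ?_
    have := lint_left a m p hma.le hp
    calc ∫⁻ x in Set.Ioo a m, ENNReal.ofReal (((b - a) / 2) ^ q * (x - a) ^ p)
        = ENNReal.ofReal (((b - a) / 2) ^ q) * ∫⁻ x in Set.Ioo a m, ENNReal.ofReal ((x - a) ^ p) := by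
          simp_rw [ENNReal.ofReal_mul (Real.rpow_nonneg hd.le q)]
          rw [MeasureTheory.lintegral_const_mul' _ _ ENNReal.ofReal_ne_top]
      _ = ENNReal.ofReal (((b - a) / 2) ^ q) * ENNReal.ofReal ((m - a) ^ (p + 1) / (p + 1)) := by rw [this]
      _ ≤ ENNReal.ofReal (((b - a) / 2) ^ (p + q + 1) * (1 / (p + 1))) := by
          rw [← ENNReal.ofReal_mul (Real.rpow_nonneg hd.le q)]
          refine ENNReal.ofReal_le_ofReal (le_of_eq ?_)
          have hma' : m - a = (b - a) / 2 := by simp [hm]; ring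
          have hr : ((b - a)/2) ^ (p + q + 1) = ((b - a)/2) ^ q * ((b - a)/2) ^ (p + 1) := by
            rw [← Real.rpow_add hd]; ring_nf
          rw [hma', hr]; ring
  have h2 : ∫⁻ x in Set.Ico m b, ENNReal.ofReal ((x - a) ^ p * (b - x) ^ q) ≤
      ENNReal.ofReal (((b - a) / 2) ^ (p + q + 1) * (1 / (q + 1))) := by
    rw [show (∫⁻ x in Set.Ico m b, ENNReal.ofReal ((x - a) ^ p * (b - x) ^ q)) =
        ∫⁻ x in Set.Ioo m b, ENNReal.ofReal ((x - a) ^ p * (b - x) ^ q) from by rw [hIco]]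
    have step : ∫⁻ x in Set.Ioo m b, ENNReal.ofReal ((x - a) ^ p * (b - x) ^ q) ≤
        ∫⁻ x in Set.Ioo m b, ENNReal.ofReal (((b - a) / 2) ^ p * (b - x) ^ q) := by
      refine MeasureTheory.setLIntegral_mono' measurableSet_Ioo fun x hx => ?_
      refine ENNReal.ofReal_le_ofReal ?_
      refine mul_le_mul_of_nonneg_right ?_ (Real.rpow_nonneg (by linarith [hx.2]) _)
      refine Real.rpow_le_rpow_of_nonpos hd ?_ hp0.le
      have hma' : m - a = (b - a) / 2 := by simp [hm]; ring
      linarith [hx.1, hma' ▸ (by linarith [hx.1] : m - a ≤ x - a)]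
    refine step.trans ?_
    have := lint_right m b q hmb.le hq
    calc ∫⁻ x in Set.Ioo m b, ENNReal.ofReal (((b - a) / 2) ^ p * (b - x) ^ q)
        = ENNReal.ofReal (((b - a) / 2) ^ p) * ∫⁻ x in Set.Ioo m b, ENNReal.ofReal ((b - x) ^ q) := by
          simp_rw [ENNReal.ofReal_mul (Real.rpow_nonneg hd.le p)]
          rw [MeasureTheory.lintegral_const_mul' _ _ ENNReal.ofReal_ne_top]
      _ = ENNReal.ofReal (((b - a) / 2) ^ p) * ENNReal.ofReal ((b - m) ^ (q + 1) / (q + 1)) := by rw [this]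
      _ ≤ ENNReal.ofReal (((b - a) / 2) ^ (p + q + 1) * (1 / (q + 1))) := by
          rw [← ENNReal.ofReal_mul (Real.rpow_nonneg hd.le p)]
          refine ENNReal.ofReal_le_ofReal (le_of_eq ?_)
          have hbm' : b - m = (b - a) / 2 := by simp [hm]; ring
          have hr : ((b - a)/2) ^ (p + q + 1) = ((b - a)/2) ^ p * ((b - a)/2) ^ (q + 1) := by
            rw [← Real.rpow_add hd]; ring_nf
          rw [hbm', hr]; ring
  calc _ ≤ ENNReal.ofReal (((b - a) / 2) ^ (p + q + 1) * (1 / (p + 1))) +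
        ENNReal.ofReal (((b - a) / 2) ^ (p + q + 1) * (1 / (q + 1))) := add_le_add h1 h2
    _ = ENNReal.ofReal (((b - a) / 2) ^ (p + q + 1) * (1 / (p + 1) + 1 / (q + 1))) := by
        have hp1 : (0:ℝ) < p + 1 := by linarith
        have hq1 : (0:ℝ) < q + 1 := by linarith
        rw [← ENNReal.ofReal_add (by positivity) (by positivity)]
        ring_nf

lemma lint_ofReal_cmul (c : ℝ) (hc : 0 ≤ c) (f : ℝ → ℝ) (S : Set ℝ) :
    ∫⁻ x in S, ENNReal.ofReal (c * f x) = ENNReal.ofReal c * ∫⁻ x in S, ENNReal.ofReal (f x) := by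
  simp_rw [ENNReal.ofReal_mul hc]
  exact MeasureTheory.lintegral_const_mul' _ _ ENNReal.ofReal_ne_top

theorem stmt9 (α : ℝ) (hα : α ∈ Set.Ioo (1 : ℝ) 2) :
    ∃ C : ℝ, 0 < C ∧ ∀ t : ℝ, 0 < t →
      ∫⁻ u in Set.Ioo (0 : ℝ) (t / 2), ∫⁻ r in Set.Ioo (t / 2) t,
          ENNReal.ofReal
            ((r - u) ^ (-2 / α) *
              ((t - r) ^ (1 / α - 1) + (r - u) ^ (1 / α - 1)) *
              ((t - u) ^ (1 / α - 1) + u ^ (1 / α - 1))) ≤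
        ENNReal.ofReal C := by
  obtain ⟨hα1, hα2⟩ := hα
  have hα0 : (0:ℝ) < α := by linarith
  set β : ℝ := 1 / α with hβdef
  have hβ0 : 0 < β := by positivity
  have hβ1 : β < 1 := by rw [hβdef]; rw [div_lt_one hα0]; linarith
  set w : ℝ := (β + 1) / 2 with hwdef
  have hw0 : 0 < w := by positivity
  have hw1 : w < 1 := by rw [hwdef]; linarith
  have h2w : 2 * w = β + 1 := by rw [hwdef]; ring
  have h1β : (0:ℝ) < 1 - β := by linarith
  have h1w : (0:ℝ) < 1 - w := by linarith
  set c1 : ℝ := 1 / (1 - β) + 1 / β with hc1def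
  have hc1 : 0 < c1 := by rw [hc1def]; positivity
  set c3 : ℝ := 1 / β + 1 / (1 - w) with hc3def
  have hc3 : 0 < c3 := by rw [hc3def]; positivity
  clear_value β w c1 c3
  refine ⟨c1 * (1 / (1 - β)) + c1 * c1 + 1 / ((1 - w) * (1 - w)) + 2 ^ (w - β) * c3 / (1 - w),
    ?_, ?_⟩
  · have h2p : (0:ℝ) < 2 ^ (w - β) := Real.rpow_pos_of_pos (by norm_num) _
    have p1 := mul_pos hc1 (one_div_pos.mpr h1β)
    have p2 := mul_pos hc1 hc1
    have p3 := one_div_pos.mpr (mul_pos h1w h1w)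
    have p4 := div_pos (mul_pos h2p hc3) h1w
    exact add_pos (add_pos (add_pos p1 p2) p3) p4
  intro t ht
  set s : ℝ := t / 2 with hsdef
  have hs : 0 < s := by positivity
  have hst : s < t := by rw [hsdef]; linarith
  have hts : t - s = s := by rw [hsdef]; ring
  have hexp : -2 / α = -(2 * β) := by rw [hβdef]; ring
  set d2 : ℝ := s ^ (1 - w) / (1 - w) with hd2def
  have hd2 : 0 ≤ d2 := by rw [hd2def]; positivity
  clear_value s d2
  have inner_bound : ∀ u ∈ Set.Ioo (0:ℝ) s,
      (∫⁻ r in Set.Ioo s t, ENNReal.ofReal ((r - u) ^ (-2 / α) *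
          ((t - r) ^ (β - 1) + (r - u) ^ (β - 1)) *
          ((t - u) ^ (β - 1) + u ^ (β - 1)))) ≤
        ENNReal.ofReal (c1 * ((s - u) ^ (-β) * (s ^ (β - 1) + u ^ (β - 1)))) +
        ENNReal.ofReal (d2 * ((s - u) ^ (-w) * (s ^ (β - 1) + u ^ (β - 1)))) := by
    intro u hu
    obtain ⟨hu0, hus⟩ := hu
    have hy : 0 < s - u := by linarith
    have hHu : 0 ≤ s ^ (β - 1) + u ^ (β - 1) := by positivity
    have ptwise : ∀ r ∈ Set.Ioo s t,
        ENNReal.ofReal ((r - u) ^ (-2 / α) * ((t - r) ^ (β - 1) + (r - u) ^ (β - 1)) *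
            ((t - u) ^ (β - 1) + u ^ (β - 1)))
          ≤ ENNReal.ofReal ((s - u) ^ (-β) * (s ^ (β - 1) + u ^ (β - 1)) *
                ((r - s) ^ (-β) * (t - r) ^ (β - 1)))
            + ENNReal.ofReal ((s - u) ^ (-w) * (s ^ (β - 1) + u ^ (β - 1)) * (r - s) ^ (-w)) := by
      intro r hr
      obtain ⟨hrs, hrt⟩ := hr
      have hx : 0 < r - s := by linarith
      have htr : 0 < t - r := by linarith
      have hru : 0 < r - u := by linarith
      have h2 : (r - u) ^ (-(2 * β)) ≤ (r - s) ^ (-β) * (s - u) ^ (-β) := by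
        have hsq : (r - s) * (s - u) ≤ (r - u) ^ (2:ℝ) := by
          rw [show ((2:ℝ)) = ((2:ℕ):ℝ) by norm_num, Real.rpow_natCast]
          nlinarith
        calc (r - u) ^ (-(2 * β)) = ((r - u) ^ (2:ℝ)) ^ (-β) := by
              rw [show -(2 * β) = (2:ℝ) * (-β) by ring, Real.rpow_mul hru.le]
          _ ≤ ((r - s) * (s - u)) ^ (-β) :=
              Real.rpow_le_rpow_of_nonpos (by positivity) hsq (by linarith)
          _ = (r - s) ^ (-β) * (s - u) ^ (-β) := Real.mul_rpow hx.le hy.le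
      have h3 : (r - u) ^ (-(2 * β)) * (r - u) ^ (β - 1) = (r - u) ^ (-(β + 1)) := by
        rw [← Real.rpow_add hru, show -(2 * β) + (β - 1) = -(β + 1) by ring]
      have h4 : (r - u) ^ (-(β + 1)) ≤ (r - s) ^ (-w) * (s - u) ^ (-w) := by
        have hsq : (r - s) * (s - u) ≤ (r - u) ^ (2:ℝ) := by
          rw [show ((2:ℝ)) = ((2:ℕ):ℝ) by norm_num, Real.rpow_natCast]
          nlinarith
        calc (r - u) ^ (-(β + 1)) = ((r - u) ^ (2:ℝ)) ^ (-w) := by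
              rw [show -(β + 1) = (2:ℝ) * (-w) by linarith, Real.rpow_mul hru.le]
          _ ≤ ((r - s) * (s - u)) ^ (-w) :=
              Real.rpow_le_rpow_of_nonpos (by positivity) hsq (by linarith)
          _ = (r - s) ^ (-w) * (s - u) ^ (-w) := Real.mul_rpow hx.le hy.le
      have h5 : (t - u) ^ (β - 1) ≤ s ^ (β - 1) :=
        Real.rpow_le_rpow_of_nonpos hs (by linarith) (by linarith)
      have hH : (t - u) ^ (β - 1) + u ^ (β - 1) ≤ s ^ (β - 1) + u ^ (β - 1) :=
        add_le_add h5 le_rfl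
      have htu : 0 < t - u := by linarith
      have hHnn : 0 ≤ (t - u) ^ (β - 1) + u ^ (β - 1) := by positivity
      have key : (r - u) ^ (-2 / α) * ((t - r) ^ (β - 1) + (r - u) ^ (β - 1)) *
            ((t - u) ^ (β - 1) + u ^ (β - 1))
          ≤ (s - u) ^ (-β) * (s ^ (β - 1) + u ^ (β - 1)) * ((r - s) ^ (-β) * (t - r) ^ (β - 1))
            + (s - u) ^ (-w) * (s ^ (β - 1) + u ^ (β - 1)) * (r - s) ^ (-w) := by
        rw [hexp]
        have hA : (r - u) ^ (-(2 * β)) * ((t - r) ^ (β - 1) + (r - u) ^ (β - 1)) *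
              ((t - u) ^ (β - 1) + u ^ (β - 1))
            = (r - u) ^ (-(2 * β)) * (t - r) ^ (β - 1) * ((t - u) ^ (β - 1) + u ^ (β - 1))
              + (r - u) ^ (-(β + 1)) * ((t - u) ^ (β - 1) + u ^ (β - 1)) := by
          rw [← h3]; ring
        rw [hA]
        have ht1 : (r - u) ^ (-(2 * β)) * (t - r) ^ (β - 1) * ((t - u) ^ (β - 1) + u ^ (β - 1))
            ≤ (r - s) ^ (-β) * (s - u) ^ (-β) * (t - r) ^ (β - 1) *
                (s ^ (β - 1) + u ^ (β - 1)) := by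
          refine mul_le_mul (mul_le_mul_of_nonneg_right h2 (Real.rpow_nonneg htr.le _)) hH hHnn
            (by positivity)
        have ht2 : (r - u) ^ (-(β + 1)) * ((t - u) ^ (β - 1) + u ^ (β - 1))
            ≤ (r - s) ^ (-w) * (s - u) ^ (-w) * (s ^ (β - 1) + u ^ (β - 1)) :=
          mul_le_mul h4 hH hHnn (by positivity)
        calc _ ≤ (r - s) ^ (-β) * (s - u) ^ (-β) * (t - r) ^ (β - 1) * (s ^ (β - 1) + u ^ (β - 1))
              + (r - s) ^ (-w) * (s - u) ^ (-w) * (s ^ (β - 1) + u ^ (β - 1)) := add_le_add ht1 ht2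
          _ = _ := by ring
      calc ENNReal.ofReal ((r - u) ^ (-2 / α) * ((t - r) ^ (β - 1) + (r - u) ^ (β - 1)) *
              ((t - u) ^ (β - 1) + u ^ (β - 1)))
          ≤ ENNReal.ofReal ((s - u) ^ (-β) * (s ^ (β - 1) + u ^ (β - 1)) *
                ((r - s) ^ (-β) * (t - r) ^ (β - 1))
              + (s - u) ^ (-w) * (s ^ (β - 1) + u ^ (β - 1)) * (r - s) ^ (-w)) :=
            ENNReal.ofReal_le_ofReal key
        _ ≤ _ := ENNReal.ofReal_add_le
    have Ibeta : ∫⁻ r in Set.Ioo s t, ENNReal.ofReal ((r - s) ^ (-β) * (t - r) ^ (β - 1)) ≤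
        ENNReal.ofReal c1 := by
      refine (lint_beta s t (-β) (β - 1) hst (by linarith) (by linarith) (by linarith)
        (by linarith)).trans ?_
      refine ENNReal.ofReal_le_ofReal (le_of_eq ?_)
      rw [show -β + (β - 1) + 1 = (0:ℝ) by ring, Real.rpow_zero, one_mul, hc1def]
      ring_nf
    have Ileft : ∫⁻ r in Set.Ioo s t, ENNReal.ofReal ((r - s) ^ (-w)) = ENNReal.ofReal d2 := by
      rw [lint_left s t (-w) hst.le (by linarith), hts, hd2def, show -w + 1 = 1 - w by ring]
    have hG1 : 0 ≤ (s - u) ^ (-β) * (s ^ (β - 1) + u ^ (β - 1)) :=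
      mul_nonneg (Real.rpow_nonneg hy.le _) hHu
    have hG2 : 0 ≤ (s - u) ^ (-w) * (s ^ (β - 1) + u ^ (β - 1)) :=
      mul_nonneg (Real.rpow_nonneg hy.le _) hHu
    calc (∫⁻ r in Set.Ioo s t, ENNReal.ofReal ((r - u) ^ (-2 / α) *
            ((t - r) ^ (β - 1) + (r - u) ^ (β - 1)) * ((t - u) ^ (β - 1) + u ^ (β - 1))))
        ≤ ∫⁻ r in Set.Ioo s t,
            (ENNReal.ofReal ((s - u) ^ (-β) * (s ^ (β - 1) + u ^ (β - 1)) *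
                ((r - s) ^ (-β) * (t - r) ^ (β - 1)))
              + ENNReal.ofReal ((s - u) ^ (-w) * (s ^ (β - 1) + u ^ (β - 1)) * (r - s) ^ (-w))) :=
          MeasureTheory.setLIntegral_mono' measurableSet_Ioo ptwise
      _ = (∫⁻ r in Set.Ioo s t, ENNReal.ofReal ((s - u) ^ (-β) * (s ^ (β - 1) + u ^ (β - 1)) *
                ((r - s) ^ (-β) * (t - r) ^ (β - 1))))
          + ∫⁻ r in Set.Ioo s t, ENNReal.ofReal ((s - u) ^ (-w) * (s ^ (β - 1) + u ^ (β - 1)) *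
                (r - s) ^ (-w)) :=
          MeasureTheory.lintegral_add_left (Measurable.ennreal_ofReal <| measurable_const.mul
            ((((measurable_id.sub_const s).pow measurable_const)).mul
              ((measurable_const.sub measurable_id).pow measurable_const))) _
      _ = ENNReal.ofReal ((s - u) ^ (-β) * (s ^ (β - 1) + u ^ (β - 1))) *
            (∫⁻ r in Set.Ioo s t, ENNReal.ofReal ((r - s) ^ (-β) * (t - r) ^ (β - 1)))
          + ENNReal.ofReal ((s - u) ^ (-w) * (s ^ (β - 1) + u ^ (β - 1))) *
            (∫⁻ r in Set.Ioo s t, ENNReal.ofReal ((r - s) ^ (-w))) := by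
          rw [lint_ofReal_cmul _ hG1 _ _, lint_ofReal_cmul _ hG2 _ _]
      _ ≤ ENNReal.ofReal ((s - u) ^ (-β) * (s ^ (β - 1) + u ^ (β - 1))) * ENNReal.ofReal c1
          + ENNReal.ofReal ((s - u) ^ (-w) * (s ^ (β - 1) + u ^ (β - 1))) * ENNReal.ofReal d2 :=
          add_le_add (mul_le_mul' le_rfl Ibeta) (mul_le_mul' le_rfl Ileft.le)
      _ = _ := by
          rw [ENNReal.ofReal_mul hc1.le, ENNReal.ofReal_mul hd2]
          ring
  -- outer integrals
  have measK : ∀ p : ℝ, Measurable fun u : ℝ =>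
      ENNReal.ofReal (c1 * ((s - u) ^ p * (s ^ (β - 1) + u ^ (β - 1)))) := by
    intro p
    exact Measurable.ennreal_ofReal <| measurable_const.mul
      (((measurable_const.sub measurable_id).pow measurable_const).mul
        (measurable_const.add (measurable_id.pow measurable_const)))
  have K1 : ∫⁻ u in Set.Ioo (0:ℝ) s,
      ENNReal.ofReal ((s - u) ^ (-β) * (s ^ (β - 1) + u ^ (β - 1))) ≤
      ENNReal.ofReal (1 / (1 - β)) + ENNReal.ofReal c1 := by
    calc ∫⁻ u in Set.Ioo (0:ℝ) s, ENNReal.ofReal ((s - u) ^ (-β) * (s ^ (β - 1) + u ^ (β - 1)))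
        ≤ ∫⁻ u in Set.Ioo (0:ℝ) s, (ENNReal.ofReal (s ^ (β - 1) * (s - u) ^ (-β))
            + ENNReal.ofReal (u ^ (β - 1) * (s - u) ^ (-β))) := by
          refine MeasureTheory.setLIntegral_mono' measurableSet_Ioo fun u hu => ?_
          rw [show (s - u) ^ (-β) * (s ^ (β - 1) + u ^ (β - 1))
              = s ^ (β - 1) * (s - u) ^ (-β) + u ^ (β - 1) * (s - u) ^ (-β) by ring]
          exact ENNReal.ofReal_add_le
      _ = (∫⁻ u in Set.Ioo (0:ℝ) s, ENNReal.ofReal (s ^ (β - 1) * (s - u) ^ (-β)))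
          + ∫⁻ u in Set.Ioo (0:ℝ) s, ENNReal.ofReal (u ^ (β - 1) * (s - u) ^ (-β)) :=
          MeasureTheory.lintegral_add_left (Measurable.ennreal_ofReal <| measurable_const.mul
            ((measurable_const.sub measurable_id).pow measurable_const)) _
      _ ≤ ENNReal.ofReal (1 / (1 - β)) + ENNReal.ofReal c1 := by
          refine add_le_add (le_of_eq ?_) ?_
          · rw [lint_ofReal_cmul _ (Real.rpow_nonneg hs.le _) _ _,
              lint_right 0 s (-β) hs.le (by linarith),
              ← ENNReal.ofReal_mul (Real.rpow_nonneg hs.le _)]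
            congr 1
            rw [sub_zero, mul_div_assoc', ← Real.rpow_add hs,
              show β - 1 + (-β + 1) = (0:ℝ) by ring, Real.rpow_zero]
            ring_nf
          · have hb := lint_beta 0 s (β - 1) (-β) hs (by linarith) (by linarith) (by linarith)
              (by linarith)
            simp only [sub_zero] at hb
            refine hb.trans (ENNReal.ofReal_le_ofReal (le_of_eq ?_))
            rw [show β - 1 + -β + 1 = (0:ℝ) by ring, Real.rpow_zero, one_mul, hc1def]
            ring_nf
  have K2 : ∫⁻ u in Set.Ioo (0:ℝ) s,
      ENNReal.ofReal ((s - u) ^ (-w) * (s ^ (β - 1) + u ^ (β - 1))) ≤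
      ENNReal.ofReal (s ^ (β - w) / (1 - w)) + ENNReal.ofReal ((s / 2) ^ (β - w) * c3) := by
    calc ∫⁻ u in Set.Ioo (0:ℝ) s, ENNReal.ofReal ((s - u) ^ (-w) * (s ^ (β - 1) + u ^ (β - 1)))
        ≤ ∫⁻ u in Set.Ioo (0:ℝ) s, (ENNReal.ofReal (s ^ (β - 1) * (s - u) ^ (-w))
            + ENNReal.ofReal (u ^ (β - 1) * (s - u) ^ (-w))) := by
          refine MeasureTheory.setLIntegral_mono' measurableSet_Ioo fun u hu => ?_
          rw [show (s - u) ^ (-w) * (s ^ (β - 1) + u ^ (β - 1))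
              = s ^ (β - 1) * (s - u) ^ (-w) + u ^ (β - 1) * (s - u) ^ (-w) by ring]
          exact ENNReal.ofReal_add_le
      _ = (∫⁻ u in Set.Ioo (0:ℝ) s, ENNReal.ofReal (s ^ (β - 1) * (s - u) ^ (-w)))
          + ∫⁻ u in Set.Ioo (0:ℝ) s, ENNReal.ofReal (u ^ (β - 1) * (s - u) ^ (-w)) :=
          MeasureTheory.lintegral_add_left (Measurable.ennreal_ofReal <| measurable_const.mul
            ((measurable_const.sub measurable_id).pow measurable_const)) _
      _ ≤ ENNReal.ofReal (s ^ (β - w) / (1 - w)) + ENNReal.ofReal ((s / 2) ^ (β - w) * c3) := by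
          refine add_le_add (le_of_eq ?_) ?_
          · rw [lint_ofReal_cmul _ (Real.rpow_nonneg hs.le _) _ _,
              lint_right 0 s (-w) hs.le (by linarith),
              ← ENNReal.ofReal_mul (Real.rpow_nonneg hs.le _)]
            congr 1
            rw [sub_zero, mul_div_assoc', ← Real.rpow_add hs,
              show β - 1 + (-w + 1) = β - w by ring]
            ring_nf
          · have hb := lint_beta 0 s (β - 1) (-w) hs (by linarith) (by linarith) (by linarith)
              (by linarith)
            simp only [sub_zero] at hb
            refine hb.trans (ENNReal.ofReal_le_ofReal (le_of_eq ?_))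
            rw [show β - 1 + -w + 1 = β - w by ring, hc3def]
            ring_nf
  have hI1 : d2 * (s ^ (β - w) / (1 - w)) = 1 / ((1 - w) * (1 - w)) := by
    rw [hd2def, div_mul_div_comm, ← Real.rpow_add hs,
      show 1 - w + (β - w) = (0:ℝ) by linarith, Real.rpow_zero]
  have hI2 : d2 * ((s / 2) ^ (β - w) * c3) = 2 ^ (w - β) * c3 / (1 - w) := by
    rw [hd2def, Real.div_rpow hs.le (by norm_num : (0:ℝ) ≤ 2)]
    have e1 : s ^ (1 - w) * s ^ (β - w) = 1 := by
      rw [← Real.rpow_add hs, show 1 - w + (β - w) = (0:ℝ) by linarith, Real.rpow_zero]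
    have e2 : (2:ℝ) ^ (β - w) * (2:ℝ) ^ (w - β) = 1 := by
      rw [← Real.rpow_add (by norm_num : (0:ℝ) < 2), show β - w + (w - β) = (0:ℝ) by ring,
        Real.rpow_zero]
    have h2ne : (2:ℝ) ^ (β - w) ≠ 0 := (Real.rpow_pos_of_pos (by norm_num) _).ne'
    field_simp
    linear_combination e1 - e2
  have hn1 : 0 ≤ c1 * (1 / (1 - β)) := mul_nonneg hc1.le (one_div_nonneg.mpr h1β.le)
  have hn2 : 0 ≤ c1 * c1 := mul_nonneg hc1.le hc1.le
  have hn3 : 0 ≤ 1 / ((1 - w) * (1 - w)) := one_div_nonneg.mpr (mul_nonneg h1w.le h1w.le)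
  have hn4 : 0 ≤ 2 ^ (w - β) * c3 / (1 - w) :=
    div_nonneg (mul_nonneg (Real.rpow_nonneg (by norm_num) _) hc3.le) h1w.le
  calc ∫⁻ u in Set.Ioo (0:ℝ) s, ∫⁻ r in Set.Ioo s t,
        ENNReal.ofReal ((r - u) ^ (-2 / α) * ((t - r) ^ (β - 1) + (r - u) ^ (β - 1)) *
          ((t - u) ^ (β - 1) + u ^ (β - 1)))
      ≤ ∫⁻ u in Set.Ioo (0:ℝ) s,
          (ENNReal.ofReal (c1 * ((s - u) ^ (-β) * (s ^ (β - 1) + u ^ (β - 1))))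
            + ENNReal.ofReal (d2 * ((s - u) ^ (-w) * (s ^ (β - 1) + u ^ (β - 1))))) :=
        MeasureTheory.setLIntegral_mono' measurableSet_Ioo inner_bound
    _ = (∫⁻ u in Set.Ioo (0:ℝ) s,
          ENNReal.ofReal (c1 * ((s - u) ^ (-β) * (s ^ (β - 1) + u ^ (β - 1)))))
        + ∫⁻ u in Set.Ioo (0:ℝ) s,
          ENNReal.ofReal (d2 * ((s - u) ^ (-w) * (s ^ (β - 1) + u ^ (β - 1)))) :=
        MeasureTheory.lintegral_add_left (measK (-β)) _
    _ = ENNReal.ofReal c1 * (∫⁻ u in Set.Ioo (0:ℝ) s,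
          ENNReal.ofReal ((s - u) ^ (-β) * (s ^ (β - 1) + u ^ (β - 1))))
        + ENNReal.ofReal d2 * ∫⁻ u in Set.Ioo (0:ℝ) s,
          ENNReal.ofReal ((s - u) ^ (-w) * (s ^ (β - 1) + u ^ (β - 1))) := by
        rw [lint_ofReal_cmul _ hc1.le _ _, lint_ofReal_cmul _ hd2 _ _]
    _ ≤ ENNReal.ofReal c1 * (ENNReal.ofReal (1 / (1 - β)) + ENNReal.ofReal c1)
        + ENNReal.ofReal d2 * (ENNReal.ofReal (s ^ (β - w) / (1 - w))
            + ENNReal.ofReal ((s / 2) ^ (β - w) * c3)) :=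
        add_le_add (mul_le_mul' le_rfl K1) (mul_le_mul' le_rfl K2)
    _ = ENNReal.ofReal (c1 * (1 / (1 - β))) + ENNReal.ofReal (c1 * c1)
        + (ENNReal.ofReal (d2 * (s ^ (β - w) / (1 - w)))
          + ENNReal.ofReal (d2 * ((s / 2) ^ (β - w) * c3))) := by
        rw [mul_add, mul_add, ← ENNReal.ofReal_mul hc1.le, ← ENNReal.ofReal_mul hc1.le,
          ← ENNReal.ofReal_mul hd2, ← ENNReal.ofReal_mul hd2]
    _ = ENNReal.ofReal (c1 * (1 / (1 - β)) + c1 * c1 + 1 / ((1 - w) * (1 - w))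
          + 2 ^ (w - β) * c3 / (1 - w)) := by
        rw [hI1, hI2, ← ENNReal.ofReal_add hn1 hn2, ← ENNReal.ofReal_add hn3 hn4,
          ← ENNReal.ofReal_add (add_nonneg hn1 hn2) (add_nonneg hn3 hn4)]
        congr 1
        ring
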